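/- The q-Pochhammer function and the q-binomial coefficient are q-holonomic in both variables (Lemma 6.2(a)): both F and G are q-holonomic functions ℤ² → ℚ(q). (For n ≥ k ≥ 0, G(n,k) equals the q-binomial coefficient (q;q)_n/((q;q)_k (q;q)_{n−k}).) -/

import Mathlib

open scoped BigOperators

noncomputable section

/-- The operator `M^α L^β` acting on functions `ℤ^r → V`:
`(M^α L^β f)(n) = q^(α·n) • f(n + β)`, where `q = X ∈ R = k(q) = RatFunc k`. -/
def shiftZ (k : Type) [Field k] {V : Type} [AddCommGroup V] [Module (RatFunc k) V]
    {r : ℕ} (α β : Fin r → ℕ) (f : (Fin r → ℤ) → V) : (Fin r → ℤ) → V :=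
  fun n => ((RatFunc.X : RatFunc k) ^ (∑ i, (α i : ℤ) * n i)) • f (fun i => n i + (β i : ℤ))

/-- The subspace `F_m f` spanned by the `M^α L^β f` with `|α| + |β| ≤ m`. -/
def FmZ (k : Type) [Field k] {V : Type} [AddCommGroup V] [Module (RatFunc k) V]
    {r : ℕ} (m : ℕ) (f : (Fin r → ℤ) → V) : Submodule (RatFunc k) ((Fin r → ℤ) → V) :=
  Submodule.span (RatFunc k)
    { g | ∃ α β : Fin r → ℕ, (∑ i, α i) + (∑ i, β i) ≤ m ∧ g = shiftZ k α β f }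

/-- `f : ℤ^r → V` is q-holonomic if each `F_m f` is finite dimensional over `R = k(q)`
and there is a constant `C` with `dim_R F_m f ≤ C (m+1)^r` for all `m`. -/
def IsQHolonomicZ (k : Type) [Field k] {V : Type} [AddCommGroup V] [Module (RatFunc k) V]
    {r : ℕ} (f : (Fin r → ℤ) → V) : Prop :=
  (∀ m : ℕ, FiniteDimensional (RatFunc k) (FmZ k m f)) ∧
  ∃ C : ℕ, ∀ m : ℕ, Module.finrank (RatFunc k) (FmZ k m f) ≤ C * (m + 1) ^ r

/-- The q-Pochhammer symbol `(q^n; q^{-1})_m = Π_{j=0}^{m-1} (1 - q^{n-j}) ∈ ℚ(q)`. -/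
def qPochDesc (n : ℤ) (m : ℕ) : RatFunc ℚ :=
  ∏ j ∈ Finset.range m, (1 - (RatFunc.X : RatFunc ℚ) ^ (n - (j : ℤ)))

/-- `F(n,k) = (q^n; q^{-1})_k` for `k ≥ 0` and `0` for `k < 0`. -/
def Ffun : (Fin 2 → ℤ) → RatFunc ℚ := fun p =>
  if 0 ≤ p 1 then qPochDesc (p 0) (p 1).toNat else 0

/-- `G(n,k) = (q^n; q^{-1})_k / (q^k; q^{-1})_k` for `k ≥ 0` and `0` for `k < 0`;
for `n ≥ k ≥ 0` this is the q-binomial coefficient. -/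
def Gfun : (Fin 2 → ℤ) → RatFunc ℚ := fun p =>
  if 0 ≤ p 1 then qPochDesc (p 0) (p 1).toNat / qPochDesc (p 1) (p 1).toNat else 0


set_option synthInstance.maxHeartbeats 1000000
set_option maxHeartbeats 1000000
open scoped Classical

local notation "Xq" => (RatFunc.X : RatFunc ℚ)

lemma Xq_ne : Xq ≠ 0 := RatFunc.X_ne_zero

lemma qP_zero (n : ℤ) : qPochDesc n 0 = 1 := Finset.prod_range_zero _

lemma qP_succ (n : ℤ) (K : ℕ) :
    qPochDesc n (K+1) = qPochDesc n K * (1 - Xq ^ (n - (K:ℤ))) :=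
  Finset.prod_range_succ _ _

lemma qP_succ' (n : ℤ) (K : ℕ) :
    qPochDesc n (K+1) = (1 - Xq ^ n) * qPochDesc (n-1) K := by
  rw [qPochDesc, Finset.prod_range_succ', mul_comm]
  congr 1
  · norm_num
  · apply Finset.prod_congr rfl
    intro i _
    congr 1
    · congr 1
      push_cast; ring

lemma Xq_zpow_ne_one (e : ℤ) (he : 1 ≤ e) : Xq ^ e ≠ 1 := by
  obtain ⟨i, rfl⟩ : ∃ i : ℕ, e = (i:ℤ) + 1 := ⟨(e-1).toNat, by omega⟩
  intro h
  rw [show ((i:ℤ)+1) = ((i+1:ℕ):ℤ) by push_cast; ring, zpow_natCast] at h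
  have h1 : (algebraMap (Polynomial ℚ) (RatFunc ℚ)) (Polynomial.X ^ (i+1)) =
      (algebraMap (Polynomial ℚ) (RatFunc ℚ)) 1 := by
    rw [map_pow, map_one, RatFunc.algebraMap_X, h]
  have h2 := RatFunc.algebraMap_injective ℚ h1
  have := congrArg (Polynomial.eval 0) h2
  simp at this

lemma qP_nat_ne (K : ℕ) : qPochDesc (K:ℤ) K ≠ 0 := by
  rw [qPochDesc]
  apply Finset.prod_ne_zero_iff.2
  intro j hj
  rw [Finset.mem_range] at hj
  have h1 : (1:ℤ) ≤ (K:ℤ) - (j:ℤ) := by omega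
  have := Xq_zpow_ne_one _ h1
  intro h
  exact this (by linear_combination -h)

lemma key2' (n : ℤ) (K : ℕ) :
    Xq^(K:ℤ) * qPochDesc (n+1) K - Xq^(n+1) * qPochDesc (n+1) K
      = Xq^(K:ℤ) * qPochDesc n K - Xq^(n+1+(K:ℤ)) * qPochDesc n K := by
  have h1 := qP_succ (n+1) K
  have h2 : qPochDesc (n+1) (K+1) = (1 - Xq^(n+1)) * qPochDesc n K := by
    have := qP_succ' (n+1) K
    rwa [show n+1-1 = n by ring] at this
  have h3 : Xq^(n+1) = Xq^(K:ℤ) * Xq^(n+1-(K:ℤ)) := by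
    rw [← zpow_add₀ Xq_ne]; congr 1; ring
  have h4 : Xq^(n+1+(K:ℤ)) = Xq^(n+1) * Xq^(K:ℤ) := zpow_add₀ Xq_ne _ _
  linear_combination -(Xq^(K:ℤ)) * h1 + (Xq^(K:ℤ)) * h2 - qPochDesc (n+1) K * h3 +
    qPochDesc n K * h4

def Phif : ℤ → ℤ → RatFunc ℚ := fun n k => if 0 ≤ k then qPochDesc n k.toNat else 0
def Phig : ℤ → ℤ → RatFunc ℚ :=
  fun n k => if 0 ≤ k then qPochDesc n k.toNat / qPochDesc k k.toNat else 0

lemma one_sub_Xq_pow_ne (e : ℤ) (he : 1 ≤ e) : (1:RatFunc ℚ) - Xq^e ≠ 0 :=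
  sub_ne_zero.2 (Ne.symm (Xq_zpow_ne_one e he))

lemma B2F (N K : ℤ) :
    Xq^K * Phif (N+1) K - Xq^(N+1) * Phif (N+1) K
      = Xq^K * Phif N K - Xq^(N+1+K) * Phif N K := by
  by_cases hk : 0 ≤ K
  · obtain ⟨Kn, rfl⟩ : ∃ Kn : ℕ, K = (Kn:ℤ) := ⟨K.toNat, (Int.toNat_of_nonneg hk).symm⟩
    simp only [Phif, if_pos (Int.natCast_nonneg Kn), Int.toNat_natCast]
    exact key2' N Kn
  · simp only [Phif, if_neg hk]; ring

lemma B1F (N K : ℤ) :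
    Xq^(2*K+1) * Phif N (K+1)
      = Xq^K * Phif N (K+1) - Xq^K * Phif N K + Xq^N * Phif N K
        + Xq^(2*K+1) * Phif N K - Xq^(N+K+1) * Phif N K := by
  rcases lt_trichotomy K (-1) with h|h|h
  · have h1 : ¬ (0:ℤ) ≤ K + 1 := by omega
    have h2 : ¬ (0:ℤ) ≤ K := by omega
    simp only [Phif, if_neg h1, if_neg h2]; ring
  · subst h
    norm_num [Phif, qP_zero]
  · have hk : (0:ℤ) ≤ K := by omega
    obtain ⟨Kn, rfl⟩ : ∃ Kn : ℕ, K = (Kn:ℤ) := ⟨K.toNat, (Int.toNat_of_nonneg hk).symm⟩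
    have h01 : (0:ℤ) ≤ (Kn:ℤ) := Int.natCast_nonneg Kn
    have h02 : (0:ℤ) ≤ (Kn:ℤ)+1 := by omega
    simp only [Phif, if_pos h01, if_pos h02, Int.toNat_natCast,
      show ((Kn:ℤ)+1).toNat = Kn+1 by omega]
    have h1 := qP_succ N Kn
    have e1 : Xq^(2*(Kn:ℤ)+1) = Xq^(Kn:ℤ) * (Xq^(Kn:ℤ) * Xq) := by
      rw [show (2*(Kn:ℤ)+1) = (Kn:ℤ) + ((Kn:ℤ) + 1) by ring, zpow_add₀ Xq_ne,
        zpow_add₀ Xq_ne, zpow_one]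
    have e2 : Xq^(N+(Kn:ℤ)+1) = Xq^N * (Xq^(Kn:ℤ) * Xq) := by
      rw [show (N+(Kn:ℤ)+1) = N + ((Kn:ℤ) + 1) by ring, zpow_add₀ Xq_ne,
        zpow_add₀ Xq_ne, zpow_one]
    have e3 : Xq^N = Xq^(Kn:ℤ) * Xq^(N-(Kn:ℤ)) := by
      rw [← zpow_add₀ Xq_ne]; congr 1; ring
    rw [e1, e2, h1, e3]; ring

lemma B3F (N K : ℤ) :
    Phif (N+2) (K+1)
      = Phif (N+1) (K+1) + Xq^(N+1) * Phif N K - Phif N K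
        - Xq^(N+2) * Phif (N+1) K + Phif (N+1) K := by
  rcases lt_trichotomy K (-1) with h|h|h
  · have h1 : ¬ (0:ℤ) ≤ K + 1 := by omega
    have h2 : ¬ (0:ℤ) ≤ K := by omega
    simp only [Phif, if_neg h1, if_neg h2]; ring
  · subst h
    norm_num [Phif, qP_zero]
  · have hk : (0:ℤ) ≤ K := by omega
    obtain ⟨Kn, rfl⟩ : ∃ Kn : ℕ, K = (Kn:ℤ) := ⟨K.toNat, (Int.toNat_of_nonneg hk).symm⟩
    have h01 : (0:ℤ) ≤ (Kn:ℤ) := Int.natCast_nonneg Kn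
    have h02 : (0:ℤ) ≤ (Kn:ℤ)+1 := by omega
    simp only [Phif, if_pos h01, if_pos h02, Int.toNat_natCast,
      show ((Kn:ℤ)+1).toNat = Kn+1 by omega]
    have h1 : qPochDesc (N+2) (Kn+1) = (1 - Xq^(N+2)) * qPochDesc (N+1) Kn := by
      have := qP_succ' (N+2) Kn; rwa [show N+2-1 = N+1 by ring] at this
    have h2 : qPochDesc (N+1) (Kn+1) = (1 - Xq^(N+1)) * qPochDesc N Kn := by
      have := qP_succ' (N+1) Kn; rwa [show N+1-1 = N by ring] at this
    rw [h1, h2]; ring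

lemma B2G (N K : ℤ) :
    Xq^K * Phig (N+1) K - Xq^(N+1) * Phig (N+1) K
      = Xq^K * Phig N K - Xq^(N+1+K) * Phig N K := by
  by_cases hk : 0 ≤ K
  · obtain ⟨Kn, rfl⟩ : ∃ Kn : ℕ, K = (Kn:ℤ) := ⟨K.toNat, (Int.toNat_of_nonneg hk).symm⟩
    simp only [Phig, if_pos (Int.natCast_nonneg Kn), Int.toNat_natCast]
    have hc := qP_nat_ne Kn
    have hkey := key2' N Kn
    field_simp
    simp only [zpow_natCast] at hkey ⊢
    linear_combination hkey
  · simp only [Phig, if_neg hk]; ring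

lemma B1G (N K : ℤ) :
    Xq^(2*K+1) * Phig N (K+1)
      = Xq^K * Phig N (K+1) - Xq^K * Phig N K + Xq^N * Phig N K := by
  rcases lt_trichotomy K (-1) with h|h|h
  · have h1 : ¬ (0:ℤ) ≤ K + 1 := by omega
    have h2 : ¬ (0:ℤ) ≤ K := by omega
    simp only [Phig, if_neg h1, if_neg h2]; ring
  · subst h
    norm_num [Phig, qP_zero]
  · have hk : (0:ℤ) ≤ K := by omega
    obtain ⟨Kn, rfl⟩ : ∃ Kn : ℕ, K = (Kn:ℤ) := ⟨K.toNat, (Int.toNat_of_nonneg hk).symm⟩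
    have h01 : (0:ℤ) ≤ (Kn:ℤ) := Int.natCast_nonneg Kn
    have h02 : (0:ℤ) ≤ (Kn:ℤ)+1 := by omega
    simp only [Phig, if_pos h01, if_pos h02, Int.toNat_natCast,
      show ((Kn:ℤ)+1).toNat = Kn+1 by omega]
    have h1 := qP_succ N Kn
    have hc1 : qPochDesc ((Kn:ℤ)+1) (Kn+1) = (1 - Xq^(Kn:ℤ) * Xq) * qPochDesc (Kn:ℤ) Kn := by
      have h' := qP_succ' ((Kn:ℤ)+1) Kn
      rw [show (Kn:ℤ)+1-1 = (Kn:ℤ) by ring, zpow_add₀ Xq_ne, zpow_one] at h'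
      exact h'
    have hc0 := qP_nat_ne Kn
    have hs : (1:RatFunc ℚ) - Xq^(Kn:ℤ) * Xq ≠ 0 := by
      have := one_sub_Xq_pow_ne ((Kn:ℤ)+1) (by omega)
      rwa [zpow_add₀ Xq_ne, zpow_one] at this
    have e1 : Xq^(2*(Kn:ℤ)+1) = Xq^(Kn:ℤ) * (Xq^(Kn:ℤ) * Xq) := by
      rw [show (2*(Kn:ℤ)+1) = (Kn:ℤ) + ((Kn:ℤ) + 1) by ring, zpow_add₀ Xq_ne,
        zpow_add₀ Xq_ne, zpow_one]
    have e3 : Xq^N = Xq^(Kn:ℤ) * Xq^(N-(Kn:ℤ)) := by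
      rw [← zpow_add₀ Xq_ne]; congr 1; ring
    have hd : ((1 - Xq^(Kn:ℤ) * Xq) * qPochDesc (Kn:ℤ) Kn) ≠ 0 := mul_ne_zero hs hc0
    rw [e1, h1, hc1, e3,
      ← mul_div_mul_left (qPochDesc N Kn) (qPochDesc (Kn:ℤ) Kn) hs]
    simp only [mul_div_assoc']
    rw [div_sub_div_same, ← add_div, div_eq_div_iff hd hd]
    ring

lemma B3G (N K : ℤ) :
    Phig (N+1) (K+1) = Phig N K + Xq^(K+1) * Phig N (K+1) := by
  rcases lt_trichotomy K (-1) with h|h|h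
  · have h1 : ¬ (0:ℤ) ≤ K + 1 := by omega
    have h2 : ¬ (0:ℤ) ≤ K := by omega
    simp only [Phig, if_neg h1, if_neg h2]; ring
  · subst h
    norm_num [Phig, qP_zero]
  · have hk : (0:ℤ) ≤ K := by omega
    obtain ⟨Kn, rfl⟩ : ∃ Kn : ℕ, K = (Kn:ℤ) := ⟨K.toNat, (Int.toNat_of_nonneg hk).symm⟩
    have h01 : (0:ℤ) ≤ (Kn:ℤ) := Int.natCast_nonneg Kn
    have h02 : (0:ℤ) ≤ (Kn:ℤ)+1 := by omega
    simp only [Phig, if_pos h01, if_pos h02, Int.toNat_natCast,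
      show ((Kn:ℤ)+1).toNat = Kn+1 by omega]
    have h1 := qP_succ N Kn
    have h2 : qPochDesc (N+1) (Kn+1) = (1 - Xq^(N+1)) * qPochDesc N Kn := by
      have := qP_succ' (N+1) Kn; rwa [show N+1-1 = N by ring] at this
    have hc1 : qPochDesc ((Kn:ℤ)+1) (Kn+1) = (1 - Xq^(Kn:ℤ) * Xq) * qPochDesc (Kn:ℤ) Kn := by
      have h' := qP_succ' ((Kn:ℤ)+1) Kn
      rw [show (Kn:ℤ)+1-1 = (Kn:ℤ) by ring, zpow_add₀ Xq_ne, zpow_one] at h'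
      exact h'
    have hc0 := qP_nat_ne Kn
    have hs : (1:RatFunc ℚ) - Xq^(Kn:ℤ) * Xq ≠ 0 := by
      have := one_sub_Xq_pow_ne ((Kn:ℤ)+1) (by omega)
      rwa [zpow_add₀ Xq_ne, zpow_one] at this
    have e4 : Xq^((Kn:ℤ)+1) = Xq^(Kn:ℤ) * Xq := by
      rw [zpow_add₀ Xq_ne, zpow_one]
    have e5 : Xq^(N+1) = Xq^(Kn:ℤ) * Xq * Xq^(N-(Kn:ℤ)) := by
      rw [show N+1 = ((Kn:ℤ)+1) + (N - (Kn:ℤ)) by ring, zpow_add₀ Xq_ne, e4]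
    have hd : ((1 - Xq^(Kn:ℤ) * Xq) * qPochDesc (Kn:ℤ) Kn) ≠ 0 := mul_ne_zero hs hc0
    rw [h2, e5, h1, hc1, e4,
      ← mul_div_mul_left (qPochDesc N Kn) (qPochDesc (Kn:ℤ) Kn) hs]
    simp only [mul_div_assoc']
    rw [← add_div, div_eq_div_iff hd hd]
    ring

lemma Xsplit (p q : ℕ) (x y : ℤ) :
    Xq^((p:ℤ)*x + (q:ℤ)*y) = (Xq^x)^p * (Xq^y)^q := by
  rw [zpow_add₀ Xq_ne, mul_comm ((p:ℤ)) x, zpow_mul, zpow_natCast,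
    mul_comm ((q:ℤ)) y, zpow_mul, zpow_natCast]

lemma X2 : Xq^(2:ℤ) = Xq * Xq := by
  rw [show (2:ℤ) = 1+1 from rfl, zpow_add₀ Xq_ne, zpow_one]

lemma shiftZ_F_apply (a b c d : ℕ) (n : Fin 2 → ℤ) :
    shiftZ ℚ ![a,b] ![c,d] Ffun n
      = (Xq^(n 0))^a * (Xq^(n 1))^b * Phif (n 0 + (c:ℤ)) (n 1 + (d:ℤ)) := by
  simp only [shiftZ, Fin.sum_univ_two, Matrix.cons_val_zero, Matrix.cons_val_one,
    Matrix.head_cons, smul_eq_mul]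
  rw [Xsplit]
  rfl

lemma shiftZ_G_apply (a b c d : ℕ) (n : Fin 2 → ℤ) :
    shiftZ ℚ ![a,b] ![c,d] Gfun n
      = (Xq^(n 0))^a * (Xq^(n 1))^b * Phig (n 0 + (c:ℤ)) (n 1 + (d:ℤ)) := by
  simp only [shiftZ, Fin.sum_univ_two, Matrix.cons_val_zero, Matrix.cons_val_one,
    Matrix.head_cons, smul_eq_mul]
  rw [Xsplit]
  rfl

lemma I1F (a b c d : ℕ) :
    (Xq^d) • shiftZ ℚ ![a,b+1] ![c+1,d] Ffun
      = (Xq^(c+1)) • shiftZ ℚ ![a+1,b] ![c+1,d] Ffun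
        + (Xq^d) • shiftZ ℚ ![a,b+1] ![c,d] Ffun
        - (Xq^(c+1+d)) • shiftZ ℚ ![a+1,b+1] ![c,d] Ffun := by
  funext n
  simp only [Pi.smul_apply, Pi.add_apply, Pi.sub_apply, shiftZ_F_apply, smul_eq_mul]
  push_cast
  have hB := B2F (n 0 + (c:ℤ)) (n 1 + (d:ℤ))
  rw [show n 0 + (c:ℤ) + 1 = n 0 + ((c:ℤ)+1) by ring] at hB
  simp only [zpow_add₀ Xq_ne, zpow_natCast, zpow_one, X2] at hB
  linear_combination ((Xq^(n 0))^a * (Xq^(n 1))^b) * hB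

lemma I1G (a b c d : ℕ) :
    (Xq^d) • shiftZ ℚ ![a,b+1] ![c+1,d] Gfun
      = (Xq^(c+1)) • shiftZ ℚ ![a+1,b] ![c+1,d] Gfun
        + (Xq^d) • shiftZ ℚ ![a,b+1] ![c,d] Gfun
        - (Xq^(c+1+d)) • shiftZ ℚ ![a+1,b+1] ![c,d] Gfun := by
  funext n
  simp only [Pi.smul_apply, Pi.add_apply, Pi.sub_apply, shiftZ_G_apply, smul_eq_mul]
  push_cast
  have hB := B2G (n 0 + (c:ℤ)) (n 1 + (d:ℤ))
  rw [show n 0 + (c:ℤ) + 1 = n 0 + ((c:ℤ)+1) by ring] at hB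
  simp only [zpow_add₀ Xq_ne, zpow_natCast, zpow_one, X2] at hB
  linear_combination ((Xq^(n 0))^a * (Xq^(n 1))^b) * hB

lemma I2F (a b c d : ℕ) :
    (Xq^(2*d+1)) • shiftZ ℚ ![a,b+2] ![c,d+1] Ffun
      = (Xq^d) • shiftZ ℚ ![a,b+1] ![c,d+1] Ffun
        - (Xq^d) • shiftZ ℚ ![a,b+1] ![c,d] Ffun
        + (Xq^c) • shiftZ ℚ ![a+1,b] ![c,d] Ffun
        + (Xq^(2*d+1)) • shiftZ ℚ ![a,b+2] ![c,d] Ffun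
        - (Xq^(c+d+1)) • shiftZ ℚ ![a+1,b+1] ![c,d] Ffun := by
  funext n
  simp only [Pi.smul_apply, Pi.add_apply, Pi.sub_apply, shiftZ_F_apply, smul_eq_mul]
  push_cast
  have hB := B1F (n 0 + (c:ℤ)) (n 1 + (d:ℤ))
  rw [show 2*(n 1 + (d:ℤ))+1 = n 1 + n 1 + (d:ℤ) + (d:ℤ) + 1 by ring] at hB
  rw [show n 0 + (c:ℤ) + (n 1 + (d:ℤ)) + 1 = n 0 + n 1 + (c:ℤ) + (d:ℤ) + 1 by ring] at hB
  rw [show n 1 + (d:ℤ) + 1 = n 1 + ((d:ℤ)+1) by ring] at hB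
  simp only [zpow_add₀ Xq_ne, zpow_natCast, zpow_one, X2] at hB
  linear_combination ((Xq^(n 0))^a * (Xq^(n 1))^b) * hB

lemma I2G (a b c d : ℕ) :
    (Xq^(2*d+1)) • shiftZ ℚ ![a,b+2] ![c,d+1] Gfun
      = (Xq^d) • shiftZ ℚ ![a,b+1] ![c,d+1] Gfun
        - (Xq^d) • shiftZ ℚ ![a,b+1] ![c,d] Gfun
        + (Xq^c) • shiftZ ℚ ![a+1,b] ![c,d] Gfun := by
  funext n
  simp only [Pi.smul_apply, Pi.add_apply, Pi.sub_apply, shiftZ_G_apply, smul_eq_mul]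
  push_cast
  have hB := B1G (n 0 + (c:ℤ)) (n 1 + (d:ℤ))
  rw [show 2*(n 1 + (d:ℤ))+1 = n 1 + n 1 + (d:ℤ) + (d:ℤ) + 1 by ring] at hB
  rw [show n 1 + (d:ℤ) + 1 = n 1 + ((d:ℤ)+1) by ring] at hB
  simp only [zpow_add₀ Xq_ne, zpow_natCast, zpow_one, X2] at hB
  linear_combination ((Xq^(n 0))^a * (Xq^(n 1))^b) * hB

lemma I3F (a b c d : ℕ) :
    shiftZ ℚ ![a,b] ![c+2,d+1] Ffun
      = shiftZ ℚ ![a,b] ![c+1,d+1] Ffun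
        + (Xq^(c+1)) • shiftZ ℚ ![a+1,b] ![c,d] Ffun
        - shiftZ ℚ ![a,b] ![c,d] Ffun
        - (Xq^(c+2)) • shiftZ ℚ ![a+1,b] ![c+1,d] Ffun
        + shiftZ ℚ ![a,b] ![c+1,d] Ffun := by
  funext n
  simp only [Pi.smul_apply, Pi.add_apply, Pi.sub_apply, shiftZ_F_apply, smul_eq_mul]
  push_cast
  have hB := B3F (n 0 + (c:ℤ)) (n 1 + (d:ℤ))
  rw [show n 0 + (c:ℤ) + 2 = n 0 + ((c:ℤ)+2) by ring] at hB
  rw [show n 0 + (c:ℤ) + 1 = n 0 + ((c:ℤ)+1) by ring] at hB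
  rw [show n 1 + (d:ℤ) + 1 = n 1 + ((d:ℤ)+1) by ring] at hB
  simp only [zpow_add₀ Xq_ne, zpow_natCast, zpow_one, X2] at hB
  linear_combination ((Xq^(n 0))^a * (Xq^(n 1))^b) * hB

lemma I3G (a b c d : ℕ) :
    shiftZ ℚ ![a,b] ![c+1,d+1] Gfun
      = shiftZ ℚ ![a,b] ![c,d] Gfun
        + (Xq^(d+1)) • shiftZ ℚ ![a,b+1] ![c,d+1] Gfun := by
  funext n
  simp only [Pi.smul_apply, Pi.add_apply, Pi.sub_apply, shiftZ_G_apply, smul_eq_mul]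
  push_cast
  have hB := B3G (n 0 + (c:ℤ)) (n 1 + (d:ℤ))
  rw [show n 0 + (c:ℤ) + 1 = n 0 + ((c:ℤ)+1) by ring] at hB
  rw [show n 1 + (d:ℤ) + 1 = n 1 + ((d:ℤ)+1) by ring] at hB
  simp only [zpow_add₀ Xq_ne, zpow_natCast, zpow_one, X2] at hB
  linear_combination ((Xq^(n 0))^a * (Xq^(n 1))^b) * hB

def BoxB (m : ℕ) : Finset ((Fin 2 → ℕ) × (Fin 2 → ℕ)) :=
  ((Finset.range (m+1) ×ˢ Finset.range (m+1)) ×ˢ (Finset.range 2 ×ˢ Finset.range 2)).image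
      (fun x => (![x.1.1, x.2.1], ![x.2.2, x.1.2]))
  ∪ ((Finset.range (m+1) ×ˢ Finset.range (m+1)).image (fun x => (![x.1, x.2], ![0, 0])))
  ∪ ((Finset.range (m+1) ×ˢ Finset.range (m+1)).image (fun x => (![x.1, 0], ![x.2, 0])))

lemma BoxB_card (m : ℕ) : (BoxB m).card ≤ 6 * (m+1)^2 := by
  refine le_trans (Finset.card_union_le _ _) ?_
  have h3 : ((Finset.range (m+1) ×ˢ Finset.range (m+1)).image
      (fun x : ℕ × ℕ => ((![x.1, 0] : Fin 2 → ℕ), (![x.2, 0] : Fin 2 → ℕ)))).card ≤ (m+1)*(m+1) := by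
    refine le_trans (Finset.card_image_le) ?_
    simp [Finset.card_product]
  have h2 : ((Finset.range (m+1) ×ˢ Finset.range (m+1)).image
      (fun x : ℕ × ℕ => ((![x.1, x.2] : Fin 2 → ℕ), (![0, 0] : Fin 2 → ℕ)))).card ≤ (m+1)*(m+1) := by
    refine le_trans (Finset.card_image_le) ?_
    simp [Finset.card_product]
  have h1 : (((Finset.range (m+1) ×ˢ Finset.range (m+1)) ×ˢ (Finset.range 2 ×ˢ Finset.range 2)).image
      (fun x : (ℕ × ℕ) × (ℕ × ℕ) => ((![x.1.1, x.2.1] : Fin 2 → ℕ), (![x.2.2, x.1.2] : Fin 2 → ℕ)))).card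
        ≤ (m+1)*(m+1)*4 := by
    refine le_trans (Finset.card_image_le) ?_
    simp [Finset.card_product]
  have := le_trans (Finset.card_union_le _ _) (add_le_add h1 h2)
  nlinarith [this, h3]

lemma mem_BoxB_1 {m a b c d : ℕ} (ha : a ≤ m) (hd : d ≤ m) (hb : b < 2) (hc : c < 2) :
    ((![a,b] : Fin 2 → ℕ), (![c,d] : Fin 2 → ℕ)) ∈ BoxB m := by
  refine Finset.mem_union_left _ (Finset.mem_union_left _ (Finset.mem_image.2
    ⟨((a,d),(b,c)), ?_, rfl⟩))
  simp only [Finset.mem_product, Finset.mem_range]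
  omega

lemma mem_BoxB_2 {m a b : ℕ} (ha : a ≤ m) (hb : b ≤ m) :
    ((![a,b] : Fin 2 → ℕ), (![0,0] : Fin 2 → ℕ)) ∈ BoxB m := by
  refine Finset.mem_union_left _ (Finset.mem_union_right _ (Finset.mem_image.2
    ⟨(a,b), ?_, rfl⟩))
  simp only [Finset.mem_product, Finset.mem_range]
  omega

lemma mem_BoxB_3 {m a c : ℕ} (ha : a ≤ m) (hc : c ≤ m) :
    ((![a,0] : Fin 2 → ℕ), (![c,0] : Fin 2 → ℕ)) ∈ BoxB m := by
  refine Finset.mem_union_right _ (Finset.mem_image.2 ⟨(a,c), ?_, rfl⟩)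
  simp only [Finset.mem_product, Finset.mem_range]
  omega

open scoped Classical in
def gens (f : (Fin 2 → ℤ) → RatFunc ℚ) (m : ℕ) : Finset ((Fin 2 → ℤ) → RatFunc ℚ) :=
  (BoxB m).image (fun p => shiftZ ℚ p.1 p.2 f)

lemma gens_card (f : (Fin 2 → ℤ) → RatFunc ℚ) (m : ℕ) : (gens f m).card ≤ 6 * (m+1)^2 :=
  le_trans (Finset.card_image_le) (BoxB_card m)

lemma mem_gens {f : (Fin 2 → ℤ) → RatFunc ℚ} {m a b c d : ℕ}
    (h : ((![a,b] : Fin 2 → ℕ), (![c,d] : Fin 2 → ℕ)) ∈ BoxB m) :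
    shiftZ ℚ ![a,b] ![c,d] f ∈ Submodule.span (RatFunc ℚ) ((gens f m : Set ((Fin 2 → ℤ) → RatFunc ℚ))) :=
  Submodule.subset_span (Finset.mem_coe.2 (Finset.mem_image.2 ⟨(![a,b],![c,d]), h, rfl⟩))

lemma smul_mem_cancel {p : Submodule (RatFunc ℚ) ((Fin 2 → ℤ) → RatFunc ℚ)}
    {g : (Fin 2 → ℤ) → RatFunc ℚ} (e : ℕ) (h : (Xq^e) • g ∈ p) : g ∈ p := by
  have h2 := p.smul_mem ((Xq^e)⁻¹) h
  rwa [smul_smul, inv_mul_cancel₀ (pow_ne_zero _ Xq_ne), one_smul] at h2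

lemma shift_mem_F (m : ℕ) : ∀ (μ a b c d : ℕ), 2*b + c + d ≤ μ → a+b+c+d ≤ m →
    shiftZ ℚ ![a,b] ![c,d] Ffun ∈ Submodule.span (RatFunc ℚ) ((gens Ffun m : Set ((Fin 2 → ℤ) → RatFunc ℚ))) := by
  intro μ
  induction μ with
  | zero =>
    intro a b c d hμ hm
    obtain ⟨rfl, rfl, rfl⟩ : b = 0 ∧ c = 0 ∧ d = 0 := by omega
    exact mem_gens (mem_BoxB_2 (by omega) (by omega))
  | succ μ IH =>
    intro a b c d hμ hm
    rcases b with _ | b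
    · rcases d with _ | d
      · exact mem_gens (mem_BoxB_3 (by omega) (by omega))
      · rcases c with _ | c
        · exact mem_gens (mem_BoxB_1 (by omega) (by omega) (by omega) (by omega))
        · rcases c with _ | c
          · exact mem_gens (mem_BoxB_1 (by omega) (by omega) (by omega) (by omega))
          · -- I3F
            rw [I3F a 0 c d]
            refine Submodule.add_mem _ (Submodule.sub_mem _ (Submodule.sub_mem _
              (Submodule.add_mem _ ?_ (Submodule.smul_mem _ _ ?_)) ?_)
              (Submodule.smul_mem _ _ ?_)) ?_
            · exact IH a 0 (c+1) (d+1) (by omega) (by omega)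
            · exact IH (a+1) 0 c d (by omega) (by omega)
            · exact IH a 0 c d (by omega) (by omega)
            · exact IH (a+1) 0 (c+1) d (by omega) (by omega)
            · exact IH a 0 (c+1) d (by omega) (by omega)
    · rcases c with _ | c
      · rcases d with _ | d
        · exact mem_gens (mem_BoxB_2 (by omega) (by omega))
        · rcases b with _ | b
          · exact mem_gens (mem_BoxB_1 (by omega) (by omega) (by omega) (by omega))
          · -- I2F
            apply smul_mem_cancel (2*d+1)
            rw [I2F a b 0 d]
            refine Submodule.sub_mem _ (Submodule.add_mem _ (Submodule.add_mem _
              (Submodule.sub_mem _ (Submodule.smul_mem _ _ ?_) (Submodule.smul_mem _ _ ?_))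
              (Submodule.smul_mem _ _ ?_)) (Submodule.smul_mem _ _ ?_))
              (Submodule.smul_mem _ _ ?_)
            · exact IH a (b+1) 0 (d+1) (by omega) (by omega)
            · exact IH a (b+1) 0 d (by omega) (by omega)
            · exact IH (a+1) b 0 d (by omega) (by omega)
            · exact IH a (b+2) 0 d (by omega) (by omega)
            · exact IH (a+1) (b+1) 0 d (by omega) (by omega)
      · -- I1F
        apply smul_mem_cancel d
        rw [I1F a b c d]
        refine Submodule.sub_mem _ (Submodule.add_mem _ (Submodule.smul_mem _ _ ?_)
          (Submodule.smul_mem _ _ ?_)) (Submodule.smul_mem _ _ ?_)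
        · exact IH (a+1) b (c+1) d (by omega) (by omega)
        · exact IH a (b+1) c d (by omega) (by omega)
        · exact IH (a+1) (b+1) c d (by omega) (by omega)

lemma shift_mem_G (m : ℕ) : ∀ (μ a b c d : ℕ), b + 2*c + d ≤ μ → a+b+c+d ≤ m →
    shiftZ ℚ ![a,b] ![c,d] Gfun ∈ Submodule.span (RatFunc ℚ) ((gens Gfun m : Set ((Fin 2 → ℤ) → RatFunc ℚ))) := by
  intro μ
  induction μ with
  | zero =>
    intro a b c d hμ hm
    obtain ⟨rfl, rfl, rfl⟩ : b = 0 ∧ c = 0 ∧ d = 0 := by omega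
    exact mem_gens (mem_BoxB_2 (by omega) (by omega))
  | succ μ IH =>
    intro a b c d hμ hm
    rcases b with _ | b
    · rcases d with _ | d
      · exact mem_gens (mem_BoxB_3 (by omega) (by omega))
      · rcases c with _ | c
        · exact mem_gens (mem_BoxB_1 (by omega) (by omega) (by omega) (by omega))
        · -- I3G
          rw [I3G a 0 c d]
          refine Submodule.add_mem _ ?_ (Submodule.smul_mem _ _ ?_)
          · exact IH a 0 c d (by omega) (by omega)
          · exact IH a 1 c (d+1) (by omega) (by omega)
    · rcases c with _ | c
      · rcases d with _ | d
        · exact mem_gens (mem_BoxB_2 (by omega) (by omega))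
        · rcases b with _ | b
          · exact mem_gens (mem_BoxB_1 (by omega) (by omega) (by omega) (by omega))
          · -- I2G
            apply smul_mem_cancel (2*d+1)
            rw [I2G a b 0 d]
            refine Submodule.add_mem _ (Submodule.sub_mem _ (Submodule.smul_mem _ _ ?_)
              (Submodule.smul_mem _ _ ?_)) (Submodule.smul_mem _ _ ?_)
            · exact IH a (b+1) 0 (d+1) (by omega) (by omega)
            · exact IH a (b+1) 0 d (by omega) (by omega)
            · exact IH (a+1) b 0 d (by omega) (by omega)
      · -- I1G
        apply smul_mem_cancel d
        rw [I1G a b c d]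
        refine Submodule.sub_mem _ (Submodule.add_mem _ (Submodule.smul_mem _ _ ?_)
          (Submodule.smul_mem _ _ ?_)) (Submodule.smul_mem _ _ ?_)
        · exact IH (a+1) b (c+1) d (by omega) (by omega)
        · exact IH a (b+1) c d (by omega) (by omega)
        · exact IH (a+1) (b+1) c d (by omega) (by omega)

lemma etaFin2 (v : Fin 2 → ℕ) : (![v 0, v 1] : Fin 2 → ℕ) = v := by
  funext i
  fin_cases i <;> rfl

lemma FmZ_le_span (f : (Fin 2 → ℤ) → RatFunc ℚ)
    (hf : ∀ m μ a b c d : ℕ, μ ≤ μ → a+b+c+d ≤ m →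
      shiftZ ℚ ![a,b] ![c,d] f ∈ Submodule.span (RatFunc ℚ) ((gens f m : Set ((Fin 2 → ℤ) → RatFunc ℚ))))
    (m : ℕ) : FmZ ℚ m f ≤ Submodule.span (RatFunc ℚ) ((gens f m : Set ((Fin 2 → ℤ) → RatFunc ℚ))) := by
  rw [FmZ]
  apply Submodule.span_le.2
  rintro g ⟨α, β, hle, rfl⟩
  rw [Fin.sum_univ_two, Fin.sum_univ_two] at hle
  have h := hf m 0 (α 0) (α 1) (β 0) (β 1) le_rfl (by omega)
  rwa [etaFin2 α, etaFin2 β] at h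

theorem qholonomic_of_spans (f : (Fin 2 → ℤ) → RatFunc ℚ)
    (hle : ∀ m : ℕ, FmZ ℚ m f ≤ Submodule.span (RatFunc ℚ) ((gens f m : Set ((Fin 2 → ℤ) → RatFunc ℚ)))) :
    IsQHolonomicZ ℚ f := by
  constructor
  · intro m
    haveI : FiniteDimensional (RatFunc ℚ)
        (Submodule.span (RatFunc ℚ) ((gens f m : Set ((Fin 2 → ℤ) → RatFunc ℚ)))) :=
      FiniteDimensional.span_of_finite (RatFunc ℚ) (Finset.finite_toSet (gens f m))
    exact Submodule.finiteDimensional_of_le (hle m)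
  · refine ⟨6, fun m => ?_⟩
    haveI : FiniteDimensional (RatFunc ℚ)
        (Submodule.span (RatFunc ℚ) ((gens f m : Set ((Fin 2 → ℤ) → RatFunc ℚ)))) :=
      FiniteDimensional.span_of_finite (RatFunc ℚ) (Finset.finite_toSet (gens f m))
    have h1 : Module.finrank (RatFunc ℚ) (FmZ ℚ m f)
        ≤ Module.finrank (RatFunc ℚ)
          (Submodule.span (RatFunc ℚ) ((gens f m : Set ((Fin 2 → ℤ) → RatFunc ℚ)))) :=
      Submodule.finrank_mono (hle m)
    exact h1.trans ((finrank_span_finset_le_card (gens f m)).trans (gens_card f m))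

/-- Lemma 6.2(a): both `F` and `G` are q-holonomic functions `ℤ² → ℚ(q)`. -/
theorem qholonomic_F_and_G : IsQHolonomicZ ℚ Ffun ∧ IsQHolonomicZ ℚ Gfun := by
  constructor
  · exact qholonomic_of_spans Ffun (fun m => FmZ_le_span Ffun
      (fun m' μ a b c d _ hm => shift_mem_F m' (2*b+c+d) a b c d le_rfl hm) m)
  · exact qholonomic_of_spans Gfun (fun m => FmZ_le_span Gfun
      (fun m' μ a b c d _ hm => shift_mem_G m' (b+2*c+d) a b c d le_rfl hm) m)
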